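/- Suppose for each k in a finite index set K there are constants y_k > 0 and z_k, and the PSO utility on an interval is U_P(p) = α_L·Σ_{j∈L}(-(a_j·S_j(p) - b_j)² + c_j) - 2p·Σ_{k∈φ₁}(y_k p - z_k) - 2p·Σ_{k∈φ₂}C_k + Σ_{k∈K} p·ē, where S_j(p) = Σ_{k∈Λ_j∩φ₁}(y_k p - z_k) + Σ_{k∈Λ_j∩φ₂}C_k. If α_L > 0 and each a_j > 0, then the second derivative of U_P satisfies U_P''(p) = -2α_L·Σ_j a_j²·(Σ_{k∈Λ_j∩φ₁} y_k)² - 4·Σ_{k∈φ₁} y_k ≤ 0, hence U_P is concave in p. -/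

import Mathlib

/-- Lemma 2: on a price sub-interval where the sets φ₁ (interior-response MESs) and φ₂
(saturated MESs) are fixed, the PSO utility is concave in p, with second derivative
-2α_L·Σ_j a_j²·(Σ_{k∈Λ_j∩φ₁} y_k)² - 4·Σ_{k∈φ₁} y_k ≤ 0. -/
theorem stmt_9 (K L φ₁ φ₂ : Finset ℕ) (Λ : ℕ → Finset ℕ)
    (a b c y z Cc : ℕ → ℝ) (αL eb : ℝ)
    (hy : ∀ k ∈ φ₁, 0 < y k) (hαL : 0 < αL) (ha : ∀ j ∈ L, 0 < a j)
    (UP : ℝ → ℝ)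
    (hUP : ∀ p : ℝ, UP p =
      αL * ∑ j ∈ L, (-(a j * ((∑ k ∈ Λ j ∩ φ₁, (y k * p - z k)) +
          ∑ k ∈ Λ j ∩ φ₂, Cc k) - b j) ^ 2 + c j)
      - 2 * p * (∑ k ∈ φ₁, (y k * p - z k)) - 2 * p * (∑ k ∈ φ₂, Cc k)
      + ∑ _k ∈ K, p * eb) :
    (∀ p : ℝ, deriv (deriv UP) p =
      -2 * αL * ∑ j ∈ L, (a j) ^ 2 * (∑ k ∈ Λ j ∩ φ₁, y k) ^ 2 - 4 * ∑ k ∈ φ₁, y k) ∧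
    (-2 * αL * ∑ j ∈ L, (a j) ^ 2 * (∑ k ∈ Λ j ∩ φ₁, y k) ^ 2 - 4 * ∑ k ∈ φ₁, y k ≤ 0) ∧
    ConcaveOn ℝ Set.univ UP := by
  set Y : ℕ → ℝ := fun j => ∑ k ∈ Λ j ∩ φ₁, y k with hY
  set Z : ℕ → ℝ := fun j => ∑ k ∈ Λ j ∩ φ₁, z k with hZ
  set E : ℕ → ℝ := fun j => ∑ k ∈ Λ j ∩ φ₂, Cc k with hE
  set A : ℝ := αL * (∑ j ∈ L, -((a j * Y j) ^ 2)) - 2 * ∑ k ∈ φ₁, y k with hA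
  set B : ℝ := αL * (∑ j ∈ L, (-2 * (a j * Y j) * (a j * (E j - Z j) - b j)))
      + 2 * ∑ k ∈ φ₁, z k - 2 * ∑ k ∈ φ₂, Cc k + (K.card : ℝ) * eb with hB
  set C : ℝ := αL * (∑ j ∈ L, (-(a j * (E j - Z j) - b j) ^ 2 + c j)) with hC
  have h1 : ∀ (s : Finset ℕ) (p : ℝ),
      ∑ k ∈ s, (y k * p - z k) = (∑ k ∈ s, y k) * p - ∑ k ∈ s, z k := by
    intro s p
    rw [Finset.sum_sub_distrib, Finset.sum_mul]
  have key : ∀ p : ℝ, UP p = A * p ^ 2 + B * p + C := by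
    intro p
    rw [hUP]
    simp only [h1]
    have h2 : ∑ j ∈ L, (-(a j * ((Y j * p - Z j) + E j) - b j) ^ 2 + c j)
        = (∑ j ∈ L, -((a j * Y j) ^ 2)) * p ^ 2
          + (∑ j ∈ L, (-2 * (a j * Y j) * (a j * (E j - Z j) - b j))) * p
          + ∑ j ∈ L, (-(a j * (E j - Z j) - b j) ^ 2 + c j) := by
      have h3 : ∑ j ∈ L, (-(a j * ((Y j * p - Z j) + E j) - b j) ^ 2 + c j)
          = ∑ j ∈ L, ((-((a j * Y j) ^ 2)) * p ^ 2
            + (-2 * (a j * Y j) * (a j * (E j - Z j) - b j)) * p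
            + (-(a j * (E j - Z j) - b j) ^ 2 + c j)) :=
        Finset.sum_congr rfl fun j _ => by ring
      rw [h3, Finset.sum_add_distrib, Finset.sum_add_distrib,
        ← Finset.sum_mul, ← Finset.sum_mul]
    rw [h2, Finset.sum_const, nsmul_eq_mul, hA, hB, hC]
    ring
  have hUPf : UP = fun p => A * p ^ 2 + B * p + C := funext key
  have hderiv1 : deriv UP = fun p => 2 * A * p + B := by
    funext p
    rw [hUPf]
    have h : HasDerivAt (fun p : ℝ => A * p ^ 2 + B * p + C) (2 * A * p + B) p := by
      have h1 := (hasDerivAt_pow 2 p).const_mul A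
      have h2 := (hasDerivAt_id p).const_mul B
      have := (h1.add h2).add_const C
      have e : (2 * A * p + B) = A * ((2 : ℕ) * p ^ (2 - 1)) + B * 1 := by norm_num; ring
      rw [e]; exact this
    exact h.deriv
  have hderiv2 : ∀ p : ℝ, deriv (deriv UP) p = 2 * A := by
    intro p
    rw [hderiv1]
    have h : HasDerivAt (fun p : ℝ => 2 * A * p + B) (2 * A) p := by
      have := ((hasDerivAt_id p).const_mul (2 * A)).add_const B
      simpa using this
    exact h.deriv
  have hsum : ∑ j ∈ L, -((a j * Y j) ^ 2) = -∑ j ∈ L, (a j) ^ 2 * (Y j) ^ 2 := by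
    rw [← Finset.sum_neg_distrib]
    exact Finset.sum_congr rfl fun j _ => by ring
  have h2A : 2 * A = -2 * αL * ∑ j ∈ L, (a j) ^ 2 * (Y j) ^ 2 - 4 * ∑ k ∈ φ₁, y k := by
    rw [hA, hsum]; ring
  have hynn : (0 : ℝ) ≤ ∑ k ∈ φ₁, y k :=
    Finset.sum_nonneg fun k hk => (hy k hk).le
  have hsq : (0 : ℝ) ≤ ∑ j ∈ L, (a j) ^ 2 * (Y j) ^ 2 :=
    Finset.sum_nonneg fun j _ => mul_nonneg (sq_nonneg _) (sq_nonneg _)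
  have hineq : -2 * αL * ∑ j ∈ L, (a j) ^ 2 * (Y j) ^ 2 - 4 * ∑ k ∈ φ₁, y k ≤ 0 := by
    nlinarith
  have hAle : A ≤ 0 := by linarith [h2A, hineq]
  refine ⟨fun p => by rw [hderiv2 p, h2A], hineq, ?_⟩
  refine ⟨convex_univ, fun x _ xy _ μ ν hμ hν hμν => ?_⟩
  simp only [key, smul_eq_mul]
  have hν' : ν = 1 - μ := by linarith
  subst hν'
  nlinarith [mul_nonneg (neg_nonneg.2 hAle)
      (mul_nonneg (mul_nonneg hμ hν) (sq_nonneg (x - xy)))]
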